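/- For perfect transmission T = 1, there exists α > 0 such that 2·√(c₁(α,1)² + erf(α/√2)²) > 2.28; that is, in the Bell test with two homodyne measurements on the light mode, the optimized CHSH value exceeds 2.28. -/

import Mathlib

open Real

/-- Error function `erf x = (2/√π)·∫₀ˣ e^{−t²} dt`. -/
noncomputable def erf (x : ℝ) : ℝ :=
  (2 / Real.sqrt π) * ∫ t in (0 : ℝ)..x, Real.exp (-t ^ 2)

/-- Homodyne binning parameter at transmission `T`: `b = π/(2√2·√T·α)`. -/
noncomputable def bT (α T : ℝ) : ℝ := π / (2 * Real.sqrt 2 * (Real.sqrt T * α))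

/-- Homodyne interference coefficient at transmission `T`:
`c₁(α,T) = e^{−(1−T)α²/2}·[(2/√π)·∫_{−b}^{b} e^{−x²} cos(√2 x √T α) dx − e^{−Tα²/2}]`. -/
noncomputable def c1T (α T : ℝ) : ℝ :=
  Real.exp (-(1 - T) * α ^ 2 / 2) *
    ((2 / Real.sqrt π) *
        (∫ x in (-bT α T)..(bT α T),
          Real.exp (-x ^ 2) * Real.cos (Real.sqrt 2 * x * (Real.sqrt T * α)))
      - Real.exp (-T * α ^ 2 / 2))

lemma nonneg_of_deriv (f f' : ℝ → ℝ) (hder : ∀ x, HasDerivAt f (f' x) x)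
    (h0 : 0 ≤ f 0) (hd : ∀ x, 0 ≤ x → 0 ≤ f' x) {u : ℝ} (hu : 0 ≤ u) : 0 ≤ f u := by
  have hmono : MonotoneOn f (Set.Ici (0:ℝ)) := by
    apply monotoneOn_of_deriv_nonneg (convex_Ici 0)
    · exact fun x _ => (hder x).continuousAt.continuousWithinAt
    · exact fun x _ => (hder x).differentiableAt.differentiableWithinAt
    · intro x hx
      rw [interior_Ici] at hx
      rw [(hder x).deriv]
      exact hd x hx.le
  exact h0.trans (hmono (Set.mem_Ici.2 le_rfl) hu hu)

lemma expL1 {u : ℝ} (_hu : 0 ≤ u) : 1 - u ≤ Real.exp (-u) := by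
  have := Real.add_one_le_exp (-u); linarith

lemma expU2 {u : ℝ} (hu : 0 ≤ u) : Real.exp (-u) ≤ 1 - u + u ^ 2 / 2 := by
  have key := nonneg_of_deriv (fun u => (1 - u + u ^ 2 / 2) - Real.exp (-u))
      (fun x => Real.exp (-x) - (1 - x)) (fun x => ?_) (by norm_num) (fun x hx => ?_) hu
  · linarith [key]
  · have hexp : HasDerivAt (fun v : ℝ => Real.exp (-v)) (-Real.exp (-x)) x := by
      simpa [Function.comp_def] using (Real.hasDerivAt_exp (-x)).comp x (hasDerivAt_neg x)
    have hpoly := ((hasDerivAt_const x (1:ℝ)).sub (hasDerivAt_id' x)).add ((hasDerivAt_pow 2 x).div_const 2)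
    exact (hpoly.sub hexp).congr_deriv (by norm_num; try ring)
  · have := expL1 hx; linarith

lemma expL3 {u : ℝ} (hu : 0 ≤ u) : 1 - u + u ^ 2 / 2 - u ^ 3 / 6 ≤ Real.exp (-u) := by
  have key := nonneg_of_deriv (fun u => Real.exp (-u) - (1 - u + u ^ 2 / 2 - u ^ 3 / 6))
      (fun x => (1 - x + x ^ 2 / 2) - Real.exp (-x)) (fun x => ?_) (by norm_num) (fun x hx => ?_) hu
  · linarith [key]
  · have hexp : HasDerivAt (fun v : ℝ => Real.exp (-v)) (-Real.exp (-x)) x := by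
      simpa [Function.comp_def] using (Real.hasDerivAt_exp (-x)).comp x (hasDerivAt_neg x)
    have hpoly := (((hasDerivAt_const x (1:ℝ)).sub (hasDerivAt_id' x)).add ((hasDerivAt_pow 2 x).div_const 2)).sub ((hasDerivAt_pow 3 x).div_const 6)
    exact (hexp.sub hpoly).congr_deriv (by norm_num; try ring)
  · have := expU2 hx; linarith

lemma expU4 {u : ℝ} (hu : 0 ≤ u) : Real.exp (-u) ≤ 1 - u + u ^ 2 / 2 - u ^ 3 / 6 + u ^ 4 / 24 := by
  have key := nonneg_of_deriv (fun u => (1 - u + u ^ 2 / 2 - u ^ 3 / 6 + u ^ 4 / 24) - Real.exp (-u))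
      (fun x => Real.exp (-x) - (1 - x + x ^ 2 / 2 - x ^ 3 / 6)) (fun x => ?_) (by norm_num) (fun x hx => ?_) hu
  · linarith [key]
  · have hexp : HasDerivAt (fun v : ℝ => Real.exp (-v)) (-Real.exp (-x)) x := by
      simpa [Function.comp_def] using (Real.hasDerivAt_exp (-x)).comp x (hasDerivAt_neg x)
    have hpoly := ((((hasDerivAt_const x (1:ℝ)).sub (hasDerivAt_id' x)).add ((hasDerivAt_pow 2 x).div_const 2)).sub ((hasDerivAt_pow 3 x).div_const 6)).add ((hasDerivAt_pow 4 x).div_const 24)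
    exact (hpoly.sub hexp).congr_deriv (by norm_num; try ring)
  · have := expL3 hx; linarith

lemma expL5 {u : ℝ} (hu : 0 ≤ u) : 1 - u + u ^ 2 / 2 - u ^ 3 / 6 + u ^ 4 / 24 - u ^ 5 / 120 ≤ Real.exp (-u) := by
  have key := nonneg_of_deriv (fun u => Real.exp (-u) - (1 - u + u ^ 2 / 2 - u ^ 3 / 6 + u ^ 4 / 24 - u ^ 5 / 120))
      (fun x => (1 - x + x ^ 2 / 2 - x ^ 3 / 6 + x ^ 4 / 24) - Real.exp (-x)) (fun x => ?_) (by norm_num) (fun x hx => ?_) hu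
  · linarith [key]
  · have hexp : HasDerivAt (fun v : ℝ => Real.exp (-v)) (-Real.exp (-x)) x := by
      simpa [Function.comp_def] using (Real.hasDerivAt_exp (-x)).comp x (hasDerivAt_neg x)
    have hpoly := (((((hasDerivAt_const x (1:ℝ)).sub (hasDerivAt_id' x)).add ((hasDerivAt_pow 2 x).div_const 2)).sub ((hasDerivAt_pow 3 x).div_const 6)).add ((hasDerivAt_pow 4 x).div_const 24)).sub ((hasDerivAt_pow 5 x).div_const 120)
    exact (hexp.sub hpoly).congr_deriv (by norm_num; try ring)
  · have := expU4 hx; linarith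

lemma expU6 {u : ℝ} (hu : 0 ≤ u) : Real.exp (-u) ≤ 1 - u + u ^ 2 / 2 - u ^ 3 / 6 + u ^ 4 / 24 - u ^ 5 / 120 + u ^ 6 / 720 := by
  have key := nonneg_of_deriv (fun u => (1 - u + u ^ 2 / 2 - u ^ 3 / 6 + u ^ 4 / 24 - u ^ 5 / 120 + u ^ 6 / 720) - Real.exp (-u))
      (fun x => Real.exp (-x) - (1 - x + x ^ 2 / 2 - x ^ 3 / 6 + x ^ 4 / 24 - x ^ 5 / 120)) (fun x => ?_) (by norm_num) (fun x hx => ?_) hu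
  · linarith [key]
  · have hexp : HasDerivAt (fun v : ℝ => Real.exp (-v)) (-Real.exp (-x)) x := by
      simpa [Function.comp_def] using (Real.hasDerivAt_exp (-x)).comp x (hasDerivAt_neg x)
    have hpoly := ((((((hasDerivAt_const x (1:ℝ)).sub (hasDerivAt_id' x)).add ((hasDerivAt_pow 2 x).div_const 2)).sub ((hasDerivAt_pow 3 x).div_const 6)).add ((hasDerivAt_pow 4 x).div_const 24)).sub ((hasDerivAt_pow 5 x).div_const 120)).add ((hasDerivAt_pow 6 x).div_const 720)
    exact (hpoly.sub hexp).congr_deriv (by norm_num; try ring)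
  · have := expL5 hx; linarith

lemma expL7 {u : ℝ} (hu : 0 ≤ u) : 1 - u + u ^ 2 / 2 - u ^ 3 / 6 + u ^ 4 / 24 - u ^ 5 / 120 + u ^ 6 / 720 - u ^ 7 / 5040 ≤ Real.exp (-u) := by
  have key := nonneg_of_deriv (fun u => Real.exp (-u) - (1 - u + u ^ 2 / 2 - u ^ 3 / 6 + u ^ 4 / 24 - u ^ 5 / 120 + u ^ 6 / 720 - u ^ 7 / 5040))
      (fun x => (1 - x + x ^ 2 / 2 - x ^ 3 / 6 + x ^ 4 / 24 - x ^ 5 / 120 + x ^ 6 / 720) - Real.exp (-x)) (fun x => ?_) (by norm_num) (fun x hx => ?_) hu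
  · linarith [key]
  · have hexp : HasDerivAt (fun v : ℝ => Real.exp (-v)) (-Real.exp (-x)) x := by
      simpa [Function.comp_def] using (Real.hasDerivAt_exp (-x)).comp x (hasDerivAt_neg x)
    have hpoly := (((((((hasDerivAt_const x (1:ℝ)).sub (hasDerivAt_id' x)).add ((hasDerivAt_pow 2 x).div_const 2)).sub ((hasDerivAt_pow 3 x).div_const 6)).add ((hasDerivAt_pow 4 x).div_const 24)).sub ((hasDerivAt_pow 5 x).div_const 120)).add ((hasDerivAt_pow 6 x).div_const 720)).sub ((hasDerivAt_pow 7 x).div_const 5040)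
    exact (hexp.sub hpoly).congr_deriv (by norm_num; try ring)
  · have := expU6 hx; linarith

lemma expU8 {u : ℝ} (hu : 0 ≤ u) : Real.exp (-u) ≤ 1 - u + u ^ 2 / 2 - u ^ 3 / 6 + u ^ 4 / 24 - u ^ 5 / 120 + u ^ 6 / 720 - u ^ 7 / 5040 + u ^ 8 / 40320 := by
  have key := nonneg_of_deriv (fun u => (1 - u + u ^ 2 / 2 - u ^ 3 / 6 + u ^ 4 / 24 - u ^ 5 / 120 + u ^ 6 / 720 - u ^ 7 / 5040 + u ^ 8 / 40320) - Real.exp (-u))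
      (fun x => Real.exp (-x) - (1 - x + x ^ 2 / 2 - x ^ 3 / 6 + x ^ 4 / 24 - x ^ 5 / 120 + x ^ 6 / 720 - x ^ 7 / 5040)) (fun x => ?_) (by norm_num) (fun x hx => ?_) hu
  · linarith [key]
  · have hexp : HasDerivAt (fun v : ℝ => Real.exp (-v)) (-Real.exp (-x)) x := by
      simpa [Function.comp_def] using (Real.hasDerivAt_exp (-x)).comp x (hasDerivAt_neg x)
    have hpoly := ((((((((hasDerivAt_const x (1:ℝ)).sub (hasDerivAt_id' x)).add ((hasDerivAt_pow 2 x).div_const 2)).sub ((hasDerivAt_pow 3 x).div_const 6)).add ((hasDerivAt_pow 4 x).div_const 24)).sub ((hasDerivAt_pow 5 x).div_const 120)).add ((hasDerivAt_pow 6 x).div_const 720)).sub ((hasDerivAt_pow 7 x).div_const 5040)).add ((hasDerivAt_pow 8 x).div_const 40320)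
    exact (hpoly.sub hexp).congr_deriv (by norm_num; try ring)
  · have := expL7 hx; linarith

lemma expL9 {u : ℝ} (hu : 0 ≤ u) : 1 - u + u ^ 2 / 2 - u ^ 3 / 6 + u ^ 4 / 24 - u ^ 5 / 120 + u ^ 6 / 720 - u ^ 7 / 5040 + u ^ 8 / 40320 - u ^ 9 / 362880 ≤ Real.exp (-u) := by
  have key := nonneg_of_deriv (fun u => Real.exp (-u) - (1 - u + u ^ 2 / 2 - u ^ 3 / 6 + u ^ 4 / 24 - u ^ 5 / 120 + u ^ 6 / 720 - u ^ 7 / 5040 + u ^ 8 / 40320 - u ^ 9 / 362880))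
      (fun x => (1 - x + x ^ 2 / 2 - x ^ 3 / 6 + x ^ 4 / 24 - x ^ 5 / 120 + x ^ 6 / 720 - x ^ 7 / 5040 + x ^ 8 / 40320) - Real.exp (-x)) (fun x => ?_) (by norm_num) (fun x hx => ?_) hu
  · linarith [key]
  · have hexp : HasDerivAt (fun v : ℝ => Real.exp (-v)) (-Real.exp (-x)) x := by
      simpa [Function.comp_def] using (Real.hasDerivAt_exp (-x)).comp x (hasDerivAt_neg x)
    have hpoly := (((((((((hasDerivAt_const x (1:ℝ)).sub (hasDerivAt_id' x)).add ((hasDerivAt_pow 2 x).div_const 2)).sub ((hasDerivAt_pow 3 x).div_const 6)).add ((hasDerivAt_pow 4 x).div_const 24)).sub ((hasDerivAt_pow 5 x).div_const 120)).add ((hasDerivAt_pow 6 x).div_const 720)).sub ((hasDerivAt_pow 7 x).div_const 5040)).add ((hasDerivAt_pow 8 x).div_const 40320)).sub ((hasDerivAt_pow 9 x).div_const 362880)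
    exact (hexp.sub hpoly).congr_deriv (by norm_num; try ring)
  · have := expU8 hx; linarith



lemma sqrt2_bounds : 1.414213 < Real.sqrt 2 ∧ Real.sqrt 2 < 1.414214 := by
  have h := Real.sq_sqrt (by norm_num : (0:ℝ) ≤ 2)
  have h0 := Real.sqrt_nonneg 2
  constructor <;> nlinarith

lemma sqrtpi_bounds : 1.772 < Real.sqrt π ∧ Real.sqrt π < 1.77245393 := by
  constructor
  · have h := Real.sq_sqrt (le_of_lt Real.pi_pos)
    have h0 := Real.sqrt_nonneg π
    nlinarith [Real.pi_gt_d6]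
  · rw [Real.sqrt_lt' (by norm_num)]
    nlinarith [Real.pi_lt_d20]

lemma two_over_sqrtpi : (1.1283791 : ℝ) ≤ 2 / Real.sqrt π := by
  have h := sqrtpi_bounds
  rw [le_div_iff₀ (by linarith [h.1])]
  nlinarith [h.2]

lemma integral_exp_sq_lb :
    (0.8642972 : ℝ) ≤ ∫ t in (0:ℝ)..(1.59:ℝ), Real.exp (-t ^ 2) := by
  have hcont : Continuous fun t : ℝ => Real.exp (-t ^ 2) := by continuity
  have hpc : Continuous fun t : ℝ =>
      1 - t^2 + t^4/2 - t^6/6 + t^8/24 - t^10/120 + t^12/720 - t^14/5040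
        + t^16/40320 - t^18/362880 := by continuity
  have hmono : (∫ t in (0:ℝ)..(1.59:ℝ),
        (1 - t^2 + t^4/2 - t^6/6 + t^8/24 - t^10/120 + t^12/720 - t^14/5040
          + t^16/40320 - t^18/362880))
      ≤ ∫ t in (0:ℝ)..(1.59:ℝ), Real.exp (-t ^ 2) := by
    refine intervalIntegral.integral_mono_on (by norm_num)
      (hpc.intervalIntegrable _ _) (hcont.intervalIntegrable _ _) (fun x _ => ?_)
    have h := expL9 (sq_nonneg x)
    have e : 1 - x^2 + x^4/2 - x^6/6 + x^8/24 - x^10/120 + x^12/720 - x^14/5040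
        + x^16/40320 - x^18/362880
        = 1 - x^2 + (x^2)^2/2 - (x^2)^3/6 + (x^2)^4/24 - (x^2)^5/120 + (x^2)^6/720
          - (x^2)^7/5040 + (x^2)^8/40320 - (x^2)^9/362880 := by ring
    rw [e]; exact h
  have heval := intervalIntegral.integral_eq_sub_of_hasDerivAt (a := (0:ℝ)) (b := (1.59:ℝ))
      (f := fun t : ℝ => t - t^3/3 + t^5/10 - t^7/42 + t^9/216 - t^11/1320 + t^13/9360
          - t^15/75600 + t^17/685440 - t^19/6894720)
      (f' := fun t : ℝ => 1 - t^2 + t^4/2 - t^6/6 + t^8/24 - t^10/120 + t^12/720 - t^14/5040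
          + t^16/40320 - t^18/362880)
      (fun x _ => by
        have h := (((((((((hasDerivAt_id' x).sub ((hasDerivAt_pow 3 x).div_const 3)).add
          ((hasDerivAt_pow 5 x).div_const 10)).sub ((hasDerivAt_pow 7 x).div_const 42)).add
          ((hasDerivAt_pow 9 x).div_const 216)).sub ((hasDerivAt_pow 11 x).div_const 1320)).add
          ((hasDerivAt_pow 13 x).div_const 9360)).sub ((hasDerivAt_pow 15 x).div_const 75600)).add
          ((hasDerivAt_pow 17 x).div_const 685440)).sub ((hasDerivAt_pow 19 x).div_const 6894720)
        exact h.congr_deriv (by norm_num; try ring))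
      (hpc.intervalIntegrable _ _)
  rw [heval] at hmono
  refine le_trans (by norm_num) hmono

lemma erf_lb : (0.975251 : ℝ) ≤ erf (2.25 / Real.sqrt 2) := by
  have hs2 := sqrt2_bounds
  have hs2pos : (0:ℝ) < Real.sqrt 2 := by linarith [hs2.1]
  have hx : (1.59 : ℝ) ≤ 2.25 / Real.sqrt 2 := by
    rw [le_div_iff₀ hs2pos]; nlinarith [hs2.2]
  have hcont : Continuous fun t : ℝ => Real.exp (-t ^ 2) := by continuity
  have hsplit := intervalIntegral.integral_add_adjacent_intervals
    (a := (0:ℝ)) (b := (1.59:ℝ)) (c := 2.25 / Real.sqrt 2)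
    (f := fun t : ℝ => Real.exp (-t ^ 2)) (μ := MeasureTheory.volume)
    (hcont.intervalIntegrable _ _) (hcont.intervalIntegrable _ _)
  have htail : (0:ℝ) ≤ ∫ t in (1.59:ℝ)..(2.25 / Real.sqrt 2), Real.exp (-t ^ 2) :=
    intervalIntegral.integral_nonneg hx (fun u _ => (Real.exp_pos _).le)
  have hint : (0.8642972 : ℝ) ≤ ∫ t in (0:ℝ)..(2.25 / Real.sqrt 2), Real.exp (-t ^ 2) := by
    rw [← hsplit]
    linarith [integral_exp_sq_lb]
  rw [erf]
  calc (0.975251 : ℝ) ≤ 1.1283791 * 0.8642972 := by norm_num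
    _ ≤ (2 / Real.sqrt π) * ∫ t in (0:ℝ)..(2.25 / Real.sqrt 2), Real.exp (-t ^ 2) :=
      mul_le_mul two_over_sqrtpi hint (by norm_num) (by positivity)

set_option maxHeartbeats 1000000 in
lemma c1_lb : (0.598045 : ℝ) ≤ c1T 2.25 1 := by
  have hs2 := sqrt2_bounds
  have hs2pos : (0:ℝ) < Real.sqrt 2 := by linarith [hs2.1]
  set C : ℝ := Real.sqrt 2 * 2.25 with hCdef
  have hCpos : 0 < C := by positivity
  have hClo : (3.18197925:ℝ) ≤ C := by rw [hCdef]; nlinarith [hs2.1]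
  have hChi : C ≤ (3.1819815:ℝ) := by rw [hCdef]; nlinarith [hs2.2]
  have hb : bT 2.25 1 = π / (2 * C) := by
    rw [bT, Real.sqrt_one, hCdef]; ring_nf
  set b : ℝ := π / (2 * C) with hbdef
  have hbpos : 0 < b := by positivity
  have hCb : C * b = π / 2 := by rw [hbdef]; field_simp
  have hginv : C * C⁻¹ = 1 := mul_inv_cancel₀ hCpos.ne'
  have hgpos : (0:ℝ) < C⁻¹ := inv_pos.mpr hCpos
  have hg1 : (0.3142695:ℝ) ≤ C⁻¹ := by nlinarith
  have hg2 : C⁻¹ ≤ (0.3142699:ℝ) := by nlinarith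
  have hbid : b * (2 * C) = π := by rw [hbdef]; field_simp
  have hb1 : (0.4936534:ℝ) ≤ b := by nlinarith [Real.pi_gt_d6, Real.pi_lt_d6]
  have hb2 : b ≤ (0.4936540:ℝ) := by nlinarith [Real.pi_gt_d6, Real.pi_lt_d6]
  -- rewrite the integral
  have hIeq : (∫ x in (-bT 2.25 1)..(bT 2.25 1),
        Real.exp (-x ^ 2) * Real.cos (Real.sqrt 2 * x * (Real.sqrt 1 * 2.25)))
      = ∫ x in (-b)..b, Real.exp (-x ^ 2) * Real.cos (C * x) := by
    rw [hb]
    refine intervalIntegral.integral_congr (fun x _ => ?_)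
    rw [Real.sqrt_one, one_mul, mul_right_comm]
  -- pointwise lower bound by a polynomial times cosine
  have hcont1 : Continuous fun x : ℝ => Real.exp (-x ^ 2) * Real.cos (C * x) := by fun_prop
  have hcont2 : Continuous fun x : ℝ => (1 - x^2 + x^4/2 - x^6/6) * Real.cos (C * x) := by
    fun_prop
  have hmono : (∫ x in (-b)..b, (1 - x^2 + x^4/2 - x^6/6) * Real.cos (C * x))
      ≤ ∫ x in (-b)..b, Real.exp (-x ^ 2) * Real.cos (C * x) := by
    refine intervalIntegral.integral_mono_on (by linarith)
      (hcont2.intervalIntegrable _ _) (hcont1.intervalIntegrable _ _) (fun x hx => ?_)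
    have hcos : 0 ≤ Real.cos (C * x) := by
      refine Real.cos_nonneg_of_mem_Icc ⟨?_, ?_⟩
      · have := mul_le_mul_of_nonneg_left hx.1 hCpos.le
        rw [mul_neg, hCb] at this
        linarith
      · have := mul_le_mul_of_nonneg_left hx.2 hCpos.le
        rw [hCb] at this
        linarith
    have hexp : 1 - x^2 + x^4/2 - x^6/6 ≤ Real.exp (-x^2) := by
      have h := expL3 (sq_nonneg x)
      have e : 1 - x^2 + x^4/2 - x^6/6 = 1 - x^2 + (x^2)^2/2 - (x^2)^3/6 := by ring
      rw [e]; exact h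
    exact mul_le_mul_of_nonneg_right hexp hcos
  -- evaluate the polynomial integral exactly
  have hF : ∀ x : ℝ, HasDerivAt
      (fun y : ℝ => Real.sin (C*y) *
          ((C⁻¹ + 2*C⁻¹^3 + 12*C⁻¹^5 + 120*C⁻¹^7) - (C⁻¹ + 6*C⁻¹^3 + 60*C⁻¹^5)*y^2
            + (C⁻¹/2 + 5*C⁻¹^3)*y^4 - C⁻¹/6*y^6)
        + Real.cos (C*y) *
          (-(2*C⁻¹^2 + 12*C⁻¹^4 + 120*C⁻¹^6)*y + (2*C⁻¹^2 + 20*C⁻¹^4)*y^3 - C⁻¹^2*y^5))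
      ((1 - x^2 + x^4/2 - x^6/6) * Real.cos (C * x)) x := by
    intro x
    have hsin : HasDerivAt (fun y : ℝ => Real.sin (C*y)) (Real.cos (C*x) * C) x := by
      simpa [Function.comp_def] using (Real.hasDerivAt_sin (C*x)).comp x ((hasDerivAt_id' x).const_mul C)
    have hcos : HasDerivAt (fun y : ℝ => Real.cos (C*y)) (-Real.sin (C*x) * C) x := by
      simpa [Function.comp_def] using (Real.hasDerivAt_cos (C*x)).comp x ((hasDerivAt_id' x).const_mul C)
    have hp : HasDerivAt (fun y : ℝ =>
        (C⁻¹ + 2*C⁻¹^3 + 12*C⁻¹^5 + 120*C⁻¹^7) - (C⁻¹ + 6*C⁻¹^3 + 60*C⁻¹^5)*y^2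
          + (C⁻¹/2 + 5*C⁻¹^3)*y^4 - C⁻¹/6*y^6)
        (-(C⁻¹ + 6*C⁻¹^3 + 60*C⁻¹^5)*(2*x) + (C⁻¹/2 + 5*C⁻¹^3)*(4*x^3) - C⁻¹/6*(6*x^5)) x := by
      have h := (((hasDerivAt_const x (C⁻¹ + 2*C⁻¹^3 + 12*C⁻¹^5 + 120*C⁻¹^7)).sub
        ((hasDerivAt_pow 2 x).const_mul (C⁻¹ + 6*C⁻¹^3 + 60*C⁻¹^5))).add
        ((hasDerivAt_pow 4 x).const_mul (C⁻¹/2 + 5*C⁻¹^3))).sub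
        ((hasDerivAt_pow 6 x).const_mul (C⁻¹/6))
      exact h.congr_deriv (by norm_num; try ring)
    have hq : HasDerivAt (fun y : ℝ =>
        -(2*C⁻¹^2 + 12*C⁻¹^4 + 120*C⁻¹^6)*y + (2*C⁻¹^2 + 20*C⁻¹^4)*y^3 - C⁻¹^2*y^5)
        (-(2*C⁻¹^2 + 12*C⁻¹^4 + 120*C⁻¹^6) + (2*C⁻¹^2 + 20*C⁻¹^4)*(3*x^2) - C⁻¹^2*(5*x^4)) x := by
      have h := (((hasDerivAt_id' x).const_mul (-(2*C⁻¹^2 + 12*C⁻¹^4 + 120*C⁻¹^6))).add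
        ((hasDerivAt_pow 3 x).const_mul (2*C⁻¹^2 + 20*C⁻¹^4))).sub
        ((hasDerivAt_pow 5 x).const_mul (C⁻¹^2))
      exact h.congr_deriv (by norm_num; try ring)
    have h := (hsin.mul hp).add (hcos.mul hq)
    refine h.congr_deriv ?_
    field_simp
    ring
  have heval := intervalIntegral.integral_eq_sub_of_hasDerivAt (a := -b) (b := b)
      (f' := fun x : ℝ => (1 - x^2 + x^4/2 - x^6/6) * Real.cos (C * x))
      (fun x _ => hF x) (hcont2.intervalIntegrable _ _)
  have hCnb : C * -b = -(π/2) := by rw [mul_neg, hCb]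
  rw [hCb, hCnb, Real.sin_pi_div_two, Real.cos_pi_div_two, Real.sin_neg, Real.cos_neg,
    Real.sin_pi_div_two, Real.cos_pi_div_two] at heval
  -- numeric lower bound for the evaluated integral
  have m3lo : (0.3142695:ℝ)^3 ≤ C⁻¹^3 := pow_le_pow_left₀ (by norm_num) hg1 3
  have m5lo : (0.3142695:ℝ)^5 ≤ C⁻¹^5 := pow_le_pow_left₀ (by norm_num) hg1 5
  have m7lo : (0.3142695:ℝ)^7 ≤ C⁻¹^7 := pow_le_pow_left₀ (by norm_num) hg1 7
  have m3hi : C⁻¹^3 ≤ (0.3142699:ℝ)^3 := pow_le_pow_left₀ hgpos.le hg2 3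
  have m5hi : C⁻¹^5 ≤ (0.3142699:ℝ)^5 := pow_le_pow_left₀ hgpos.le hg2 5
  have b2hi : b^2 ≤ (0.4936540:ℝ)^2 := pow_le_pow_left₀ hbpos.le hb2 2
  have b4lo : (0.4936534:ℝ)^4 ≤ b^4 := pow_le_pow_left₀ (by norm_num) hb1 4
  have b6hi : b^6 ≤ (0.4936540:ℝ)^6 := pow_le_pow_left₀ hbpos.le hb2 6
  have mb1 : C⁻¹ * b^2 ≤ (0.3142699:ℝ) * 0.4936540^2 :=
    mul_le_mul hg2 b2hi (by positivity) (by norm_num)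
  have mb3 : C⁻¹^3 * b^2 ≤ (0.3142699:ℝ)^3 * 0.4936540^2 :=
    mul_le_mul m3hi b2hi (by positivity) (by norm_num)
  have mb5 : C⁻¹^5 * b^2 ≤ (0.3142699:ℝ)^5 * 0.4936540^2 :=
    mul_le_mul m5hi b2hi (by positivity) (by norm_num)
  have mb6 : C⁻¹ * b^6 ≤ (0.3142699:ℝ) * 0.4936540^6 :=
    mul_le_mul hg2 b6hi (by positivity) (by norm_num)
  have nb1 : (0.3142695:ℝ) * 0.4936534^4 ≤ C⁻¹ * b^4 :=
    mul_le_mul hg1 b4lo (by norm_num) hgpos.le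
  have nb3 : (0.3142695:ℝ)^3 * 0.4936534^4 ≤ C⁻¹^3 * b^4 :=
    mul_le_mul m3lo b4lo (by norm_num) (by positivity)
  have hJlb : (0.60092:ℝ) ≤ ∫ x in (-b)..b, Real.exp (-x ^ 2) * Real.cos (C * x) := by
    rw [heval] at hmono
    nlinarith [hmono]
  -- exponential upper bound
  have hexp_ub : Real.exp (-(1:ℝ) * 2.25 ^ 2 / 2) ≤ 0.0800183 := by
    have he : (-(1:ℝ) * 2.25 ^ 2 / 2) = ((4:ℕ) : ℝ) * (-0.6328125) := by norm_num
    rw [he, Real.exp_nat_mul]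
    have h4 := expU4 (u := 0.6328125) (by norm_num)
    calc Real.exp (-0.6328125) ^ 4
        ≤ (1 - 0.6328125 + 0.6328125 ^ 2 / 2 - 0.6328125 ^ 3 / 6 + 0.6328125 ^ 4 / 24 : ℝ) ^ 4 :=
          pow_le_pow_left₀ (Real.exp_pos _).le h4 4
      _ ≤ 0.0800183 := by norm_num
  -- assemble
  rw [c1T]
  have h1 : Real.exp (-(1 - 1) * 2.25 ^ 2 / 2) = 1 := by norm_num
  rw [h1, one_mul, hIeq]
  have hterm : (1.1283791:ℝ) * 0.60092
      ≤ (2 / Real.sqrt π) * ∫ x in (-b)..b, Real.exp (-x ^ 2) * Real.cos (C * x) :=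
    mul_le_mul two_over_sqrtpi hJlb (by norm_num) (by positivity)
  have : (-(1:ℝ)) * 2.25 ^ 2 / 2 = -(1:ℝ) * 2.25 ^ 2 / 2 := rfl
  nlinarith [hterm, hexp_ub]

/-- At perfect transmission `T = 1`, the two-homodyne Bell test achieves an optimized CHSH
value `2√(c₁² + c₂²) > 2.28` for some amplitude `α > 0`, with `c₂ = erf(α/√2)`. -/
theorem two_homodyne_violation_perfect_transmission :
    ∃ α > (0 : ℝ),
      2 * Real.sqrt ((c1T α 1) ^ 2 + (erf (α / Real.sqrt 2)) ^ 2) > 2.28 := by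
  refine ⟨2.25, by norm_num, ?_⟩
  have h1 := c1_lb
  have h2 := erf_lb
  have hsq : (1.14:ℝ) < Real.sqrt ((c1T 2.25 1) ^ 2 + (erf (2.25 / Real.sqrt 2)) ^ 2) := by
    rw [Real.lt_sqrt (by norm_num)]
    nlinarith [h1, h2]
  norm_num
  linarith [hsq]
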